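/- arXiv:1702.08012 — 3 statements merged into one kernel-verified Lean document; each statement's English description precedes it below -/
import Mathlib

section
/- For every prime power q ≥ 2 and every integer d > 2 with (q, d) ≠ (2, 6), there exists a prime ℓ that divides q^d − 1 but does not divide q^f − 1 for any integer 1 ≤ f < d. -/
open Polynomial Finset

private lemma zsig_phi_dvd (q d : ℕ) : (cyclotomic d ℤ).eval (q:ℤ) ∣ (q:ℤ)^d - 1 := by
  have h := eval_dvd (x := (q:ℤ)) (cyclotomic.dvd_X_pow_sub_one d ℤ)
  simpa using h

private lemma zsig_dvd_iff (q ℓ f : ℕ) (hq1 : 1 ≤ q) :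
    ℓ ∣ q ^ f - 1 ↔ (q : ZMod ℓ) ^ f = 1 := by
  have h1 : (1:ℕ) ≤ q ^ f := Nat.one_le_pow _ _ hq1
  rw [← Int.natCast_dvd_natCast]
  push_cast [h1]
  rw [← ZMod.intCast_zmod_eq_zero_iff_dvd]
  push_cast
  rw [sub_eq_zero]

private lemma zsig_order_eq (q d ℓ : ℕ) (hd : 0 < d) (hℓ : ℓ.Prime)
    (hdvd : (ℓ:ℤ) ∣ (cyclotomic d ℤ).eval (q:ℤ)) (hnd : ¬ ℓ ∣ d) :
    orderOf (q : ZMod ℓ) = d := by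
  haveI : Fact ℓ.Prime := ⟨hℓ⟩
  haveI : NeZero ((d:ℕ) : ZMod ℓ) :=
    ⟨fun h => hnd ((ZMod.natCast_eq_zero_iff d ℓ).mp h)⟩
  have hroot : IsRoot (cyclotomic d (ZMod ℓ)) (q : ZMod ℓ) := by
    have h0 : (((cyclotomic d ℤ).eval (q:ℤ) : ℤ) : ZMod ℓ) = 0 :=
      (ZMod.intCast_zmod_eq_zero_iff_dvd _ _).mpr hdvd
    have happ := cyclotomic.eval_apply (q:ℤ) d (Int.castRingHom (ZMod ℓ))
    have : ((q:ℤ) : ZMod ℓ) = (q : ZMod ℓ) := by push_cast; ring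
    rw [IsRoot.def, ← this]
    simpa [h0] using happ
  exact ((isRoot_cyclotomic_iff.mp hroot).eq_orderOf).symm

private lemma zsig_order_facts (q d ℓ : ℕ) (hq2 : 2 ≤ q) (hd : 0 < d) (hℓ : ℓ.Prime)
    (hΦ : (ℓ:ℤ) ∣ (cyclotomic d ℤ).eval (q:ℤ)) :
    orderOf (q : ZMod ℓ) ∣ d ∧ orderOf (q : ZMod ℓ) ∣ ℓ - 1 ∧ 0 < orderOf (q : ZMod ℓ) := by
  haveI : Fact ℓ.Prime := ⟨hℓ⟩
  have hqd : (q : ZMod ℓ) ^ d = 1 := by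
    rw [← zsig_dvd_iff q ℓ d (by omega), ← Int.natCast_dvd_natCast]
    have h1 : (1:ℕ) ≤ q ^ d := Nat.one_le_pow _ _ (by omega)
    push_cast [h1]
    exact hΦ.trans (zsig_phi_dvd q d)
  have hfin : IsOfFinOrder (q : ZMod ℓ) := isOfFinOrder_iff_pow_eq_one.mpr ⟨d, hd, hqd⟩
  have hne : (q : ZMod ℓ) ≠ 0 := by
    intro h0
    rw [h0, zero_pow hd.ne'] at hqd
    exact zero_ne_one hqd
  refine ⟨orderOf_dvd_of_pow_eq_one hqd, ?_, hfin.orderOf_pos⟩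
  exact orderOf_dvd_of_pow_eq_one (ZMod.pow_card_sub_one_eq_one hne)

private lemma zsig_cyclo_dvd_geom (q d r : ℕ) (hd : 0 < d) (hq2 : 2 ≤ q) (hr : r ∣ d)
    (hr2 : 2 ≤ r) :
    (cyclotomic d ℤ).eval (q:ℤ) ∣ ∑ i ∈ range r, ((q:ℤ)^(d/r))^i := by
  have he : d / r ∈ d.properDivisors :=
    Nat.mem_properDivisors.mpr ⟨Nat.div_dvd_of_dvd hr, Nat.div_lt_self hd hr2⟩
  have hpoly := X_pow_sub_one_mul_cyclotomic_dvd_X_pow_sub_one_of_dvd ℤ he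
  have h := eval_dvd (x := (q:ℤ)) hpoly
  simp only [eval_mul, eval_sub, eval_pow, eval_X, eval_one] at h
  set y : ℤ := (q:ℤ)^(d/r) with hy
  have hyd : y ^ r = (q:ℤ)^d := by
    rw [hy, ← pow_mul, Nat.div_mul_cancel hr]
  have hgeom : (∑ i ∈ range r, y ^ i) * (y - 1) = (q:ℤ)^d - 1 := by
    rw [geom_sum_mul, hyd]
  have hyne : y - 1 ≠ 0 := by
    have hdr : 1 ≤ d / r := Nat.one_le_div_iff (by omega) |>.mpr (Nat.le_of_dvd hd hr)
    have : (2:ℤ) ≤ y := by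
      calc (2:ℤ) = 2^1 := (pow_one 2).symm
      _ ≤ (q:ℤ)^(d/r) :=
          pow_le_pow_left₀ (by norm_num) (by exact_mod_cast hq2) _ |>.trans
            (pow_le_pow_right₀ (by exact_mod_cast (by omega : (1:ℕ) ≤ q)) hdr)
      _ = y := rfl
    omega
  have h2 : (y - 1) * ((cyclotomic d ℤ).eval (q:ℤ)) ∣ (y - 1) * ∑ i ∈ range r, y ^ i := by
    rw [mul_comm (y-1) (∑ i ∈ range r, y ^ i), hgeom]
    exact h
  exact (mul_dvd_mul_iff_left hyne).mp h2

/-- If `ℓ ∣ Φ_d(q)` and `r` is a prime dividing `d / ord_ℓ(q)`, then `r = ℓ`. -/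
private lemma zsig_claimC (q d ℓ : ℕ) (hq2 : 2 ≤ q) (hd : 0 < d) (hℓ : ℓ.Prime)
    (hΦ : (ℓ:ℤ) ∣ (cyclotomic d ℤ).eval (q:ℤ)) (r : ℕ) (hr : r.Prime)
    (hrdm : r ∣ d / orderOf (q : ZMod ℓ)) : r = ℓ := by
  obtain ⟨hmd, hml, hm0⟩ := zsig_order_facts q d ℓ hq2 hd hℓ hΦ
  set m := orderOf (q : ZMod ℓ) with hm
  -- r ∣ d and m ∣ d / r
  obtain ⟨s, hs⟩ := hrdm
  have hdm : d = m * (d / m) := (Nat.mul_div_cancel' hmd).symm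
  have hrd : r ∣ d := by
    rw [hdm, hs]; exact ⟨m * s, by ring⟩
  have hedvd : m ∣ d / r := by
    refine ⟨s, ?_⟩
    have : d = (m * s) * r := by rw [hdm, hs]; ring
    rw [this, Nat.mul_div_cancel hr.pos (m := m * s)]
  -- ℓ divides q^(d/r) - 1
  have hpow : (q : ZMod ℓ) ^ (d / r) = 1 := by
    obtain ⟨t, ht⟩ := hedvd
    rw [ht, pow_mul, pow_orderOf_eq_one, one_pow]
  have hldvd : (ℓ:ℤ) ∣ (q:ℤ)^(d/r) - 1 := by
    have := (zsig_dvd_iff q ℓ (d/r) (by omega)).mpr hpow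
    have h1 : (1:ℕ) ≤ q ^ (d/r) := Nat.one_le_pow _ _ (by omega)
    rw [← Int.natCast_dvd_natCast] at this
    push_cast [h1] at this
    exact this
  set y : ℤ := (q:ℤ)^(d/r) with hy
  have hS : (ℓ:ℤ) ∣ ∑ i ∈ range r, y ^ i :=
    hΦ.trans (zsig_cyclo_dvd_geom q d r hd hq2 hrd hr.two_le)
  have hSr : (ℓ:ℤ) ∣ (∑ i ∈ range r, y ^ i) - (r:ℤ) := by
    have : (∑ i ∈ range r, y ^ i) - (r:ℤ) = ∑ i ∈ range r, (y ^ i - 1) := by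
      rw [sum_sub_distrib, sum_const, card_range, nsmul_eq_mul, mul_one]
    rw [this]
    refine Finset.dvd_sum fun i _ => ?_
    have : y ^ i - 1 = (∑ j ∈ range i, y ^ j) * (y - 1) := (geom_sum_mul y i).symm
    rw [this]
    exact Dvd.dvd.mul_left hldvd _
  have hlr : (ℓ:ℤ) ∣ (r:ℤ) := by
    have := dvd_sub hS hSr
    simpa using this
  exact ((Nat.prime_dvd_prime_iff_eq hℓ hr).mp (by exact_mod_cast hlr)).symm

/-- Multiplicity: if `ℓ ∣ Φ_d(q)` and `ℓ ∣ d`, `d > 2`, then `ℓ² ∤ Φ_d(q)`. -/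
private lemma zsig_claimD (q d ℓ : ℕ) (hq2 : 2 ≤ q) (hd : 2 < d) (hℓ : ℓ.Prime)
    (hΦ : (ℓ:ℤ) ∣ (cyclotomic d ℤ).eval (q:ℤ)) (hℓd : ℓ ∣ d) :
    ¬ (ℓ:ℤ)^2 ∣ (cyclotomic d ℤ).eval (q:ℤ) := by
  have hd0 : 0 < d := by omega
  obtain ⟨hmd, hml, hm0⟩ := zsig_order_facts q d ℓ hq2 hd0 hℓ hΦ
  set m := orderOf (q : ZMod ℓ) with hm
  have hl2 : 2 ≤ ℓ := hℓ.two_le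
  have hmlt : m < ℓ := lt_of_le_of_lt (Nat.le_of_dvd (by omega) hml) (by omega)
  have hlnm : ¬ ℓ ∣ m := fun h => absurd (Nat.le_of_dvd hm0 h) (by omega)
  -- m ∣ d / ℓ
  have hmdl : m ∣ d / ℓ := by
    have hcop : Nat.Coprime m ℓ := ((hℓ.coprime_iff_not_dvd).mpr hlnm).symm
    have : m ∣ (d / ℓ) * ℓ := by rw [Nat.div_mul_cancel hℓd]; exact hmd
    exact hcop.dvd_of_dvd_mul_right this
  set y : ℤ := (q:ℤ)^(d/ℓ) with hy
  have hy1 : (ℓ:ℤ) ∣ y - 1 := by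
    have hpow : (q : ZMod ℓ) ^ (d / ℓ) = 1 := by
      obtain ⟨t, ht⟩ := hmdl
      rw [ht, pow_mul, pow_orderOf_eq_one, one_pow]
    have := (zsig_dvd_iff q ℓ (d/ℓ) (by omega)).mpr hpow
    have h1 : (1:ℕ) ≤ q ^ (d/ℓ) := Nat.one_le_pow _ _ (by omega)
    rw [← Int.natCast_dvd_natCast] at this
    push_cast [h1] at this
    exact this
  set S : ℤ := ∑ i ∈ range ℓ, y ^ i with hSdef
  set T : ℤ := ∑ i ∈ range ℓ, ∑ j ∈ range i, y ^ j with hTdef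
  have hΦS : (cyclotomic d ℤ).eval (q:ℤ) ∣ S :=
    zsig_cyclo_dvd_geom q d ℓ hd0 hq2 hℓd hℓ.two_le
  have hST : S - (ℓ:ℤ) = (y - 1) * T := by
    have h1 : S - (ℓ:ℤ) = ∑ i ∈ range ℓ, (y ^ i - 1) := by
      rw [sum_sub_distrib, sum_const, card_range, nsmul_eq_mul, mul_one]
    rw [h1, hTdef, Finset.mul_sum]
    refine Finset.sum_congr rfl fun i _ => ?_
    rw [mul_comm, geom_sum_mul]
  have hsq : (ℓ:ℤ)^2 ∣ (y - 1) * T := by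
    rcases hℓ.eq_two_or_odd' with h2 | hodd
    · -- ℓ = 2 : show 4 ∣ y - 1
      subst h2
      have hm1 : m = 1 := Nat.eq_one_of_dvd_one (by simpa using hml)
      -- every prime divisor of d equals 2
      have hall : ∀ r : ℕ, r.Prime → r ∣ d → r = 2 := by
        intro r hr hrd
        refine zsig_claimC q d 2 hq2 hd0 hℓ hΦ r hr ?_
        rw [← hm, hm1, Nat.div_one]; exact hrd
      -- 4 ∣ d
      have h4 : 4 ∣ d := by
        have h2d : 2 ∣ d := hℓd
        obtain ⟨k, hk⟩ := h2d
        have hk1 : k ≠ 1 := by omega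
        have hk0 : k ≠ 0 := by omega
        obtain ⟨r, hr, hrk⟩ := Nat.exists_prime_and_dvd hk1
        have : r = 2 := hall r hr (hk ▸ hrk.mul_left 2)
        subst this
        obtain ⟨t, ht⟩ := hrk
        exact ⟨t, by omega⟩
      -- q odd
      have hqodd : ¬ (2:ℕ) ∣ q := by
        intro h2q
        have : (q : ZMod 2) = 0 := (ZMod.natCast_eq_zero_iff q 2).mpr h2q
        have h1 : (q : ZMod 2) ^ 1 = 1 := by rw [← hm1, hm, pow_orderOf_eq_one]
        rw [this] at h1; simp at h1
      -- y = t^2 with t odd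
      have hdq : d / 2 = 2 * (d / 4) := by omega
      set t : ℤ := (q:ℤ)^(d/4) with htdef
      have hyt : y = t ^ 2 := by
        rw [hy, htdef, ← pow_mul, hdq, mul_comm]
      have htodd : Odd t := by
        rw [← Int.not_even_iff_odd, even_iff_two_dvd]
        intro h2t
        have h2q : (2:ℤ) ∣ (q:ℤ) := Int.prime_two.dvd_of_dvd_pow (htdef ▸ h2t)
        exact hqodd (by exact_mod_cast h2q)
      obtain ⟨k, hk⟩ := htodd
      have h4y : ((2:ℕ):ℤ)^2 ∣ y - 1 := ⟨k^2 + k, by rw [hyt, hk]; ring⟩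
      exact h4y.mul_right T
    · -- ℓ odd : ℓ ∣ y - 1 and ℓ ∣ T
      have hT : (ℓ:ℤ) ∣ T := by
        have h1 : (ℓ:ℤ) ∣ T - ∑ i ∈ range ℓ, (i:ℤ) := by
          have heq : T - ∑ i ∈ range ℓ, (i:ℤ) = ∑ i ∈ range ℓ, ∑ j ∈ range i, (y ^ j - 1) := by
            rw [hTdef, ← sum_sub_distrib]
            refine Finset.sum_congr rfl fun i _ => ?_
            rw [sum_sub_distrib, sum_const, card_range, nsmul_eq_mul, mul_one]
          rw [heq]
          refine Finset.dvd_sum fun i _ => Finset.dvd_sum fun j _ => ?_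
          have : y ^ j - 1 = (∑ s ∈ range j, y ^ s) * (y - 1) := (geom_sum_mul y j).symm
          rw [this]
          exact hy1.mul_left _
        have h2 : (ℓ:ℤ) ∣ ∑ i ∈ range ℓ, (i:ℤ) := by
          have hnat : ℓ ∣ (∑ i ∈ range ℓ, i) * 2 := by
            rw [Finset.sum_range_id_mul_two]
            exact Dvd.intro _ rfl
          have := (Nat.Prime.dvd_mul hℓ).mp hnat
          have hsum : ℓ ∣ ∑ i ∈ range ℓ, i := by
            rcases this with h | h
            · exact h
            · exfalso
              have h2 := (Nat.prime_dvd_prime_iff_eq hℓ Nat.prime_two).mp h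
              rw [h2] at hodd
              simp [Nat.odd_iff] at hodd
          have := Int.natCast_dvd_natCast.mpr hsum
          simpa [Nat.cast_sum] using this
        have := dvd_add h1 h2
        simpa using this
      calc (ℓ:ℤ)^2 = (ℓ:ℤ) * (ℓ:ℤ) := sq (ℓ:ℤ)
        _ ∣ (y - 1) * T := mul_dvd_mul hy1 hT
  intro hcon
  have hS2 : (ℓ:ℤ)^2 ∣ S := hcon.trans hΦS
  have hfin : (ℓ:ℤ)^2 ∣ (ℓ:ℤ) := by
    have heq : (ℓ:ℤ) = S - (y - 1) * T := by linarith [hST]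
    have h := dvd_sub hS2 hsq
    rwa [← heq] at h
  have : (ℓ:ℕ)^2 ∣ ℓ := by exact_mod_cast hfin
  have := Nat.le_of_dvd (by omega) this
  nlinarith

private lemma zsig_aux1 (n : ℕ) (hn : 2 ≤ n) : n + 2 ≤ 2 ^ n := by
  induction n with
  | zero => omega
  | succ k ih =>
    rcases Nat.lt_or_ge k 2 with h | h
    · interval_cases k <;> simp_all <;> omega
    · have := ih h
      have h2 : (0:ℕ) < 2 ^ k := Nat.pow_pos (by norm_num)
      rw [pow_succ]; omega

private lemma zsig_aux2 (n : ℕ) (hn : 5 ≤ n) : 3 * n ≤ 2 ^ n - 1 := by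
  induction n with
  | zero => omega
  | succ k ih =>
    rcases Nat.lt_or_ge k 5 with h | h
    · interval_cases k <;> omega
    · have := ih h
      have h2 : (32:ℕ) ≤ 2 ^ k := by
        calc (32:ℕ) = 2^5 := by norm_num
        _ ≤ 2^k := Nat.pow_le_pow_right (by norm_num) h
      rw [pow_succ]; omega

private lemma zsig_dvd_nat (q d ℓ : ℕ) (hq1 : 1 ≤ q)
    (h : (ℓ:ℤ) ∣ (cyclotomic d ℤ).eval (q:ℤ)) : ℓ ∣ q ^ d - 1 := by
  have h1 : (1:ℕ) ≤ q ^ d := Nat.one_le_pow _ _ hq1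
  have := h.trans (zsig_phi_dvd q d)
  rw [← Int.natCast_dvd_natCast]
  push_cast [h1]
  exact this

private lemma zsig_exists_nondvd (q d : ℕ) (hq2 : 2 ≤ q) (hd : 2 < d)
    (hexc : (q, d) ≠ (2, 6)) :
    ∃ ℓ : ℕ, ℓ.Prime ∧ (ℓ:ℤ) ∣ (cyclotomic d ℤ).eval (q:ℤ) ∧ ¬ ℓ ∣ d := by
  by_contra hcon
  push_neg at hcon
  set Φ : ℤ := (cyclotomic d ℤ).eval (q:ℤ) with hΦdef
  set N : ℕ := Φ.natAbs with hNdef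
  have hd0 : 0 < d := by omega
  have hΦpos : 0 < Φ := cyclotomic_pos' d (by exact_mod_cast (by omega : (1:ℕ) < q))
  have hNlb := sub_one_pow_totient_lt_natAbs_cyclotomic_eval (n := d) (q := q)
    (by omega) (by omega)
  have hN2 : 2 ≤ N := by
    have h1 : (1:ℕ) ≤ (q - 1) ^ d.totient := Nat.one_le_pow _ _ (by omega)
    omega
  have hNd : (N:ℤ) ∣ Φ := Int.natAbs_dvd.mpr dvd_rfl
  set ℓ : ℕ := N.minFac with hℓdef
  have hℓ : ℓ.Prime := Nat.minFac_prime (by omega)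
  have hℓN : ℓ ∣ N := Nat.minFac_dvd N
  have hprime_dvd : ∀ p : ℕ, p ∣ N → (p:ℤ) ∣ Φ := fun p hp =>
    (Int.natCast_dvd_natCast.mpr hp).trans hNd
  have hℓΦ : (ℓ:ℤ) ∣ Φ := hprime_dvd ℓ hℓN
  have hℓd : ℓ ∣ d := hcon ℓ hℓ hℓΦ
  -- order facts for ℓ
  obtain ⟨hmd, hml, hm0⟩ := zsig_order_facts q d ℓ hq2 hd0 hℓ hℓΦ
  set m := orderOf (q : ZMod ℓ) with hm
  have hl2 : 2 ≤ ℓ := hℓ.two_le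
  have hmlt : m < ℓ := lt_of_le_of_lt (Nat.le_of_dvd (by omega) hml) (by omega)
  have hlnm : ¬ ℓ ∣ m := fun h => absurd (Nat.le_of_dvd hm0 h) (by omega)
  have hdm : d = m * (d / m) := (Nat.mul_div_cancel' hmd).symm
  have hℓdm : ℓ ∣ d / m := by
    rcases (hℓ.dvd_mul.mp (hdm ▸ hℓd)) with h | h
    · exact absurd h hlnm
    · exact h
  -- all primes dividing N equal ℓ
  have hall : ∀ p : ℕ, p.Prime → p ∣ N → p = ℓ := by
    intro p hp hpN
    by_contra hne
    have hpΦ : (p:ℤ) ∣ Φ := hprime_dvd p hpN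
    have hpd : p ∣ d := hcon p hp hpΦ
    obtain ⟨hmd', hml', hm0'⟩ := zsig_order_facts q d p hq2 hd0 hp hpΦ
    set m' := orderOf (q : ZMod p) with hm'
    -- p < ℓ
    have hplt : p < ℓ := by
      rcases hp.dvd_mul.mp (hdm ▸ hpd) with h | h
      · have := Nat.le_of_dvd hm0 h
        have := Nat.le_of_dvd (by omega) hml
        have hpm : p ≤ m := Nat.le_of_dvd hm0 h
        omega
      · exact absurd (zsig_claimC q d ℓ hq2 hd0 hℓ hℓΦ p hp h) hne
    -- ℓ < p
    have hdm' : d = m' * (d / m') := (Nat.mul_div_cancel' hmd').symm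
    have hℓlt : ℓ < p := by
      rcases hℓ.dvd_mul.mp (hdm' ▸ hℓd) with h | h
      · have hp2 : 2 ≤ p := hp.two_le
        have hmlt' : m' < p :=
          lt_of_le_of_lt (Nat.le_of_dvd (by omega) hml') (by omega)
        have := Nat.le_of_dvd hm0' h
        omega
      · exact absurd (zsig_claimC q d p hq2 hd0 hp hpΦ ℓ hℓ h).symm hne
    omega
  -- N = ℓ
  have hNℓ : N = ℓ := by
    obtain ⟨k, hk⟩ := hℓN
    have hk0 : k ≠ 0 := by rintro rfl; omega
    have hk1 : k = 1 := by
      by_contra hk1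
      obtain ⟨r, hr, hrk⟩ := Nat.exists_prime_and_dvd hk1
      have : r = ℓ := hall r hr (hk ▸ (hrk.mul_left ℓ))
      subst this
      have hsq : ℓ ^ 2 ∣ N := by
        obtain ⟨t, ht⟩ := hrk
        exact ⟨t, by rw [hk, ht]; ring⟩
      have : (ℓ:ℤ)^2 ∣ Φ := by
        have := Int.natCast_dvd_natCast.mpr hsq
        push_cast at this
        exact this.trans hNd
      exact zsig_claimD q d ℓ hq2 hd hℓ hℓΦ hℓd this
    rw [hk1, mul_one] at hk
    exact hk
  -- Now the size contradiction
  have hφd : ℓ - 1 ≤ d.totient := by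
    have h1 : ℓ.totient ∣ d.totient := Nat.totient_dvd_of_dvd hℓd
    have h2 : ℓ.totient = ℓ - 1 := Nat.totient_prime hℓ
    have h3 : 0 < d.totient := Nat.totient_pos.mpr hd0
    exact Nat.le_of_dvd h3 (h2 ▸ h1)
  rcases Nat.lt_or_ge q 3 with hq3 | hq3
  · -- q = 2
    have hq2' : q = 2 := by omega
    subst hq2'
    -- ℓ is odd
    have hℓne2 : ℓ ≠ 2 := by
      intro h2
      have hdvd : ℓ ∣ 2 ^ d - 1 := zsig_dvd_nat 2 d ℓ (by omega) hℓΦ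
      rw [h2] at hdvd
      have h2' : 2 ^ d = 2 * 2 ^ (d - 1) := by
        rw [← pow_succ']
        congr 1
        omega
      have hx : 1 ≤ 2 ^ (d - 1) := Nat.one_le_pow _ _ (by norm_num)
      omega
    have hℓ3 : 3 ≤ ℓ := by
      rcases hℓ.two_le.lt_or_eq with h | h
      · omega
      · omega
    by_cases hc : ℓ ∣ d / ℓ
    · -- Φ_d(2) = Φ_{d/ℓ}(2^ℓ), which is too big
      have hdl : (d / ℓ) * ℓ = d := Nat.div_mul_cancel hℓd
      have hdlpos : 0 < d / ℓ := Nat.div_pos (Nat.le_of_dvd hd0 hℓd) (by omega)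
      have hdl1 : 1 < d / ℓ := lt_of_lt_of_le (by omega) (Nat.le_of_dvd hdlpos hc)
      have hexp := cyclotomic_expand_eq_cyclotomic hℓ hc ℤ
      have heval : Φ = (cyclotomic (d/ℓ) ℤ).eval (((2:ℕ)^ℓ : ℕ) : ℤ) := by
        have h := congrArg (Polynomial.eval ((2:ℕ):ℤ)) hexp
        rw [expand_eval, hdl] at h
        rw [hΦdef, ← h]
        push_cast
        ring_nf
      have hlb := sub_one_pow_totient_lt_natAbs_cyclotomic_eval (n := d/ℓ) (q := 2^ℓ)
        hdl1 (by
          have : 2 ^ ℓ ≥ 2^2 := Nat.pow_le_pow_right (by norm_num) (by omega)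
          omega)
      have hNeq : N = ((cyclotomic (d/ℓ) ℤ).eval (((2:ℕ)^ℓ : ℕ) : ℤ)).natAbs := by
        rw [hNdef, heval]
      have ht1 : 1 ≤ (d/ℓ).totient := Nat.totient_pos.mpr (by omega)
      have hself : 2^ℓ - 1 ≤ (2^ℓ - 1) ^ (d/ℓ).totient :=
        Nat.le_self_pow (by omega) _
      have haux := zsig_aux1 ℓ (by omega)
      omega
    · -- ℓ ∤ d/ℓ : then d = m * ℓ
      have hdmeq : d / m = ℓ := by
        obtain ⟨k, hk⟩ := hℓdm
        have hk0 : k ≠ 0 := by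
          rintro rfl
          rw [mul_zero] at hk
          rw [hk, mul_zero] at hdm
          omega
        have hk1 : k = 1 := by
          by_contra hk1
          obtain ⟨r, hr, hrk⟩ := Nat.exists_prime_and_dvd hk1
          have hrl : r = ℓ := zsig_claimC 2 d ℓ hq2 hd0 hℓ hℓΦ r hr (hk ▸ hrk.mul_left ℓ)
          subst hrl
          obtain ⟨t, ht⟩ := hrk
          have hsq : ℓ * ℓ ∣ d := by
            refine ⟨m * t, ?_⟩
            rw [hdm, hk, ht]
            ring
          obtain ⟨s, hs⟩ := hsq
          have : d / ℓ = ℓ * s := by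
            rw [hs, mul_assoc, Nat.mul_div_cancel_left _ (by omega : 0 < ℓ)]
          exact hc (this ▸ ⟨s, rfl⟩)
        rw [hk1, mul_one] at hk
        exact hk
      have hdml : d = m * ℓ := by rw [hdm, hdmeq]
      by_cases hm1 : m = 1
      · -- d = ℓ, Φ = 2^ℓ - 1
        have hdeq : d = ℓ := by rw [hdml, hm1, one_mul]
        have hexp := cyclotomic_expand_eq_cyclotomic_mul hℓ
          (by simpa using hℓ.one_lt.ne' : ¬ ℓ ∣ 1) ℤ
        have h := congrArg (Polynomial.eval ((2:ℕ):ℤ)) hexp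
        rw [expand_eval, one_mul] at h
        simp only [cyclotomic_one, eval_mul, eval_sub, eval_X, eval_one] at h
        -- h : (2:ℤ)^ℓ - 1 = (cyclotomic ℓ ℤ).eval 2 * (2 - 1)
        have hΦeq : Φ = (2:ℤ)^ℓ - 1 := by
          rw [hΦdef, hdeq]
          push_cast at h ⊢
          linarith [h]
        have hNval : N = 2^ℓ - 1 := by
          have h1 : (1:ℕ) ≤ 2^ℓ := Nat.one_le_pow _ _ (by norm_num)
          have hcast : Φ = ((2^ℓ - 1 : ℕ) : ℤ) := by
            rw [hΦeq]; push_cast [h1]; ring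
          rw [hNdef, hcast, Int.natAbs_natCast]
        have haux := zsig_aux1 ℓ (by omega)
        omega
      · -- m ≥ 2
        have hm2 : 2 ≤ m := by omega
        by_cases hℓ3' : ℓ = 3
        · -- m ∣ 2, m = 2, d = 6, q = 2: excluded
          have hmd2 : m ∣ 2 := by
            have h' := hml
            rw [hℓ3'] at h'
            norm_num at h'
            exact h'
          have hm2' : m = 2 := by
            have := Nat.le_of_dvd (by norm_num) hmd2
            omega
          have : d = 6 := by rw [hdml, hm2', hℓ3']
          exact hexc (by simp [this])
        · -- ℓ ≥ 5
          have hℓ4 : ℓ ≠ 4 := by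
            intro h4
            rw [h4] at hℓ
            norm_num at hℓ
          have hℓ5 : 5 ≤ ℓ := by omega
          have hexp := cyclotomic_expand_eq_cyclotomic_mul hℓ hlnm ℤ
          have h := congrArg (Polynomial.eval ((2:ℕ):ℤ)) hexp
          rw [expand_eval] at h
          simp only [eval_mul] at h
          rw [← hdml] at h
          -- h : eval ((2:ℤ)^ℓ) (cyclotomic m ℤ) = Φ * eval 2 (cyclotomic m ℤ)
          set Bz : ℤ := (cyclotomic m ℤ).eval ((2:ℕ):ℤ) with hBz
          set B : ℕ := Bz.natAbs with hB
          set t : ℕ := m.totient with ht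
          have ht1 : 1 ≤ t := Nat.totient_pos.mpr (by omega)
          have hCeq : ((cyclotomic m ℤ).eval (((2:ℕ)^ℓ : ℕ) : ℤ)).natAbs = ℓ * B := by
            have hcast : (((2:ℕ)^ℓ : ℕ) : ℤ) = ((2:ℕ):ℤ)^ℓ := by push_cast; ring
            rw [hcast, h, Int.natAbs_mul, ← hNdef, hNℓ]
          have hlow := sub_one_pow_totient_lt_natAbs_cyclotomic_eval (n := m) (q := 2^ℓ)
            (by omega) (by
              have : 2 ^ ℓ ≥ 2^2 := Nat.pow_le_pow_right (by norm_num) (by omega)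
              omega)
          rw [hCeq] at hlow
          -- hlow : (2^ℓ - 1)^t < ℓ * B
          have hupB : B ≤ 3 ^ t := by
            have hBpos : 0 < Bz := cyclotomic_pos' m (by norm_num : (1:ℤ) < ((2:ℕ):ℤ))
            have happ := cyclotomic.eval_apply ((2:ℕ):ℤ) m (algebraMap ℤ ℝ)
            have hreal := cyclotomic_eval_le_add_one_pow_totient
              (by norm_num : (1:ℝ) < 2) m
            rw [← Nat.cast_le (α := ℝ)]
            have hcast2 : (algebraMap ℤ ℝ) ((2:ℕ):ℤ) = (2:ℝ) := by norm_num
            rw [hcast2] at happ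
            have hBz : ((B:ℕ):ℤ) = Bz := by
              rw [hB]; exact Int.natAbs_of_nonneg hBpos.le
            have hBR : ((B:ℕ):ℝ) = (cyclotomic m ℝ).eval 2 := by
              rw [happ]
              simp only [algebraMap_int_eq, eq_intCast]
              exact_mod_cast congrArg (fun z : ℤ => (z : ℝ)) hBz
            rw [hBR]
            calc (cyclotomic m ℝ).eval 2 ≤ (2+1)^t := hreal
            _ = ((3^t : ℕ) : ℝ) := by push_cast; norm_num
          have haux2 := zsig_aux2 ℓ hℓ5
          have h2l : 15 ≤ 2^ℓ - 1 := by
            have := zsig_aux2 ℓ hℓ5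
            omega
          obtain ⟨u, hu⟩ : ∃ u, t = u + 1 := ⟨t - 1, by omega⟩
          have hchain : ℓ * 3^t ≤ (2^ℓ - 1)^t := by
            rw [hu, pow_succ, pow_succ]
            calc ℓ * (3^u * 3) = (3*ℓ) * 3^u := by ring
            _ ≤ (2^ℓ - 1) * (2^ℓ - 1)^u :=
                Nat.mul_le_mul (by omega) (Nat.pow_le_pow_left (by omega) u)
            _ = (2^ℓ - 1)^u * (2^ℓ - 1) := by ring
          have hfin : ℓ * B ≤ ℓ * 3^t := Nat.mul_le_mul_left ℓ hupB
          exact absurd (hlow.trans_le (hfin.trans hchain)) (lt_irrefl _)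
  · -- q ≥ 3
    have hge : ℓ ≤ (q - 1) ^ d.totient := by
      calc ℓ ≤ 2 ^ (ℓ - 1) := by
            have := Nat.lt_two_pow_self (n := ℓ - 1)
            omega
      _ ≤ 2 ^ d.totient := Nat.pow_le_pow_right (by norm_num) hφd
      _ ≤ (q - 1) ^ d.totient := Nat.pow_le_pow_left (by omega) _
    omega

/-- Zsigmondy's theorem: for every prime power `q ≥ 2` and every `d > 2` with
`(q, d) ≠ (2, 6)` there is a prime dividing `q^d - 1` but no `q^f - 1` for `1 ≤ f < d`. -/
theorem stmt_4 (q d : ℕ) (hq : IsPrimePow q) (hq2 : 2 ≤ q) (hd : 2 < d)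
    (hexc : (q, d) ≠ (2, 6)) :
    ∃ ℓ : ℕ, ℓ.Prime ∧ ℓ ∣ q ^ d - 1 ∧ ∀ f : ℕ, 1 ≤ f → f < d → ¬ ℓ ∣ q ^ f - 1 := by
  obtain ⟨ℓ, hℓ, hℓΦ, hℓd⟩ := zsig_exists_nondvd q d hq2 hd hexc
  have hd0 : 0 < d := by omega
  have horder : orderOf (q : ZMod ℓ) = d := zsig_order_eq q d ℓ hd0 hℓ hℓΦ hℓd
  refine ⟨ℓ, hℓ, zsig_dvd_nat q d ℓ (by omega) hℓΦ, fun f hf1 hfd hdvd => ?_⟩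
  have hpow : (q : ZMod ℓ) ^ f = 1 := (zsig_dvd_iff q ℓ f (by omega)).mp hdvd
  have := orderOf_dvd_of_pow_eq_one hpow
  rw [horder] at this
  have := Nat.le_of_dvd (by omega) this
  omega
end

section
/- Let A = S_3 × C, where S_3 is the symmetric group on 3 letters and C is any cyclic group. Suppose A acts on a set X with |X| = 3 in such a way that the elements of order 3 in the factor S_3 act non-trivially on X. Then the factor C acts trivially on X, the factor S_3 acts faithfully on X, and any two such actions of A on a 3-element set are equivalent as permutation representations (i.e., related by an A-equivariant bijection). -/
open Equiv

/-- The transposition of `Fin 3` fixing `i`. -/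
def T3 : Fin 3 → Equiv.Perm (Fin 3) :=
  ![Equiv.swap 1 2, Equiv.swap 0 2, Equiv.swap 0 1]

lemma T3_sq : ∀ i, T3 i * T3 i = 1 := by decide
lemma T3_ne_one : ∀ i, T3 i ≠ 1 := by decide
lemma T3_inj : Function.Injective T3 := by decide
lemma T3_conj : ∀ (s : Equiv.Perm (Fin 3)) (i), s * T3 i * s⁻¹ = T3 (s i) := by decide
lemma sq_or_cube : ∀ s : Equiv.Perm (Fin 3), s ≠ 1 → (s * s = 1 ∨ s ^ 3 = 1) := by decide
lemma invol_is_T3 : ∀ s : Equiv.Perm (Fin 3), s ≠ 1 → s * s = 1 → ∃ i, s = T3 i := by decide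
lemma T3_mul_order3 : ∀ i j : Fin 3, i ≠ j →
    ((T3 i * T3 j) ^ 3 = 1 ∧ T3 i * T3 j ≠ 1) := by decide
lemma fixed_unique' : ∀ σ : Equiv.Perm (Fin 3), σ ≠ 1 → σ * σ = 1 →
    ∃ x, σ x = x ∧ ∀ y, σ y = y → y = x := by decide

lemma fixed_unique : ∀ σ : Equiv.Perm (Fin 3), σ ≠ 1 → σ * σ = 1 → ∃! x, σ x = x :=
  fun σ h1 h2 => (fixed_unique' σ h1 h2).imp fun _ h => ⟨h.1, h.2⟩
lemma fixed_det : ∀ (σ τ : Equiv.Perm (Fin 3)) (x), σ ≠ 1 → σ * σ = 1 → τ ≠ 1 → τ * τ = 1 →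
    σ x = x → τ x = x → σ = τ := by decide
lemma center3 : ∀ σ : Equiv.Perm (Fin 3), (∀ τ, σ * τ = τ * σ) → σ = 1 := by decide

lemma ord3 : ∀ s : Equiv.Perm (Fin 3), s ^ 3 = 1 → s ≠ 1 → orderOf s = 3 := by
  have : Fact (Nat.Prime 3) := ⟨by norm_num⟩
  intro s hs hne
  exact orderOf_eq_prime hs hne

lemma psi_inj {G : Type*} [Group G] (ψ : Equiv.Perm (Fin 3) →* G)
    (h3 : ∀ s, orderOf s = 3 → ψ s ≠ 1) : Function.Injective ψ := by
  rw [injective_iff_map_eq_one]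
  intro s hs
  by_contra hne
  rcases sq_or_cube s hne with h2 | h3'
  · obtain ⟨i, rfl⟩ := invol_is_T3 s hne h2
    obtain ⟨j, hj⟩ := exists_ne i
    have hTj : ψ (T3 j) = 1 := by
      have hc := T3_conj (Equiv.swap j i) i
      rw [Equiv.swap_apply_right] at hc
      rw [← hc, map_mul, map_mul, map_inv, hs, mul_one, mul_inv_cancel]
    obtain ⟨hcube, hne'⟩ := T3_mul_order3 i j hj.symm
    exact h3 _ (ord3 _ hcube hne') (by rw [map_mul, hs, hTj, one_mul])
  · exact h3 s (ord3 s h3' hne) hs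

lemma psi_inner (ψ : Equiv.Perm (Fin 3) →* Equiv.Perm (Fin 3))
    (h3 : ∀ s, orderOf s = 3 → ψ s ≠ 1) :
    ∃ f : Equiv.Perm (Fin 3), ∀ s, ψ s = f * s * f⁻¹ := by
  have hinj := psi_inj ψ h3
  have hT2 : ∀ i, ψ (T3 i) * ψ (T3 i) = 1 := fun i => by rw [← map_mul, T3_sq, map_one]
  have hTne : ∀ i, ψ (T3 i) ≠ 1 := fun i h =>
    T3_ne_one i (hinj (by rw [h, map_one]))
  have hfp : ∀ i, ∃! x, ψ (T3 i) x = x := fun i => fixed_unique _ (hTne i) (hT2 i)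
  set g : Fin 3 → Fin 3 := fun i => (hfp i).exists.choose with hgdef
  have hg : ∀ i, ψ (T3 i) (g i) = g i := fun i => (hfp i).exists.choose_spec
  have hgs : ∀ (s : Equiv.Perm (Fin 3)) (i), ψ s (g i) = g (s i) := by
    intro s i
    have h1 : ψ (T3 (s i)) (ψ s (g i)) = ψ s (g i) := by
      rw [← T3_conj s i, map_mul, map_mul, map_inv]
      simp [Equiv.Perm.mul_apply, hg i]
    exact (hfp (s i)).unique h1 (hg (s i))
  have ginj : Function.Injective g := by
    intro i j hij
    have : ψ (T3 i) = ψ (T3 j) :=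
      fixed_det _ _ (g i) (hTne i) (hT2 i) (hTne j) (hT2 j) (hg i) (by rw [hij]; exact hg j)
    exact T3_inj (hinj this)
  have gbij : Function.Bijective g := Finite.injective_iff_bijective.mp ginj
  refine ⟨Equiv.ofBijective g gbij, fun s => ?_⟩
  refine Equiv.ext fun x => ?_
  obtain ⟨i, rfl⟩ := gbij.surjective x
  have hfi : ∀ j, (Equiv.ofBijective g gbij) j = g j := fun j => rfl
  calc ψ s (g i) = g (s i) := hgs s i
    _ = (Equiv.ofBijective g gbij * s * (Equiv.ofBijective g gbij)⁻¹) (g i) := by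
        have h' : (Equiv.ofBijective g gbij)⁻¹ (g i) = i := by
          rw [← hfi i]; exact Equiv.symm_apply_apply _ _
        simp [Equiv.Perm.mul_apply, h', hfi]

/-- `Equiv.permCongr` as a monoid hom. -/
def permCongrHom {α β : Type*} (e : α ≃ β) : Equiv.Perm α →* Equiv.Perm β :=
  MonoidHom.mk' e.permCongr (fun a b => by ext y; simp [Equiv.Perm.mul_apply])

lemma one_action {C : Type*} [Group C] {X : Type*} [Fintype X] (hX : Fintype.card X = 3)
    (ρ : Equiv.Perm (Fin 3) × C →* Equiv.Perm X)
    (hρ : ∀ s : Equiv.Perm (Fin 3), orderOf s = 3 → ρ (s, 1) ≠ 1) :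
    ∃ (e : X ≃ Fin 3) (f : Equiv.Perm (Fin 3)),
      (∀ c : C, ρ (1, c) = 1) ∧
      (∀ (s : Equiv.Perm (Fin 3)) (x : X), e (ρ (s, 1) x) = f (s (f⁻¹ (e x)))) := by
  set eX : X ≃ Fin 3 := Fintype.equivFinOfCardEq hX with heX
  set ψ : Equiv.Perm (Fin 3) →* Equiv.Perm (Fin 3) :=
    (_root_.permCongrHom eX).comp (ρ.comp (MonoidHom.inl _ _)) with hψdef
  have hψapp : ∀ (s : Equiv.Perm (Fin 3)) (x : X), ψ s (eX x) = eX (ρ (s, 1) x) := by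
    intro s x
    show eX.permCongr (ρ (s, 1)) (eX x) = eX (ρ (s, 1) x)
    simp
  have hone : ∀ σ : Equiv.Perm X, eX.permCongr σ = 1 → σ = 1 := by
    intro σ h
    refine Equiv.ext fun x => ?_
    have h1 : eX.permCongr σ (eX x) = eX x := by rw [h]; rfl
    simp only [Equiv.permCongr_apply, Equiv.symm_apply_apply] at h1
    exact eX.injective h1
  have h3 : ∀ s, orderOf s = 3 → ψ s ≠ 1 := by
    intro s hs h
    exact hρ s hs (hone _ h)
  obtain ⟨f, hf⟩ := psi_inner ψ h3
  refine ⟨eX, f, ?_, ?_⟩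
  · intro c
    apply hone
    set σc : Equiv.Perm (Fin 3) := eX.permCongr (ρ (1, c)) with hσc
    have hcm : ∀ τ : Equiv.Perm (Fin 3), σc * τ = τ * σc := by
      intro τ
      have h1 : σc * ψ (f⁻¹ * τ * f) = ψ (f⁻¹ * τ * f) * σc := by
        show (_root_.permCongrHom eX) (ρ (1, c)) * (_root_.permCongrHom eX) (ρ (f⁻¹ * τ * f, 1)) =
          (_root_.permCongrHom eX) (ρ (f⁻¹ * τ * f, 1)) * (_root_.permCongrHom eX) (ρ (1, c))
        rw [← map_mul, ← map_mul, ← map_mul, ← map_mul]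
        congr 1
        simp [Prod.ext_iff]
      rw [hf] at h1
      have hτ : f * (f⁻¹ * τ * f) * f⁻¹ = τ := by group
      rw [hτ] at h1
      exact h1
    exact center3 σc hcm
  · intro s x
    have h1 : ψ s (eX x) = (f * s * f⁻¹) (eX x) := by rw [hf]
    rw [hψapp] at h1
    simpa [Equiv.Perm.mul_apply] using h1

/-- Lemma 3.1: the group `S₃ × C` (`C` cyclic) has, up to permutation equivalence,
a unique action on a 3-element set in which the order-3 elements of the `S₃`-factor
act non-trivially; in any such action `C` acts trivially and `S₃` acts faithfully. -/
theorem stmt_11 (C : Type*) [Group C] [IsCyclic C]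
    (X X' : Type*) [Fintype X] [Fintype X']
    (hX : Fintype.card X = 3) (hX' : Fintype.card X' = 3)
    (ρ : Equiv.Perm (Fin 3) × C →* Equiv.Perm X)
    (ρ' : Equiv.Perm (Fin 3) × C →* Equiv.Perm X')
    (hρ : ∀ s : Equiv.Perm (Fin 3), orderOf s = 3 → ρ (s, 1) ≠ 1)
    (hρ' : ∀ s : Equiv.Perm (Fin 3), orderOf s = 3 → ρ' (s, 1) ≠ 1) :
    (∀ c : C, ρ (1, c) = 1) ∧
    (Function.Injective fun s : Equiv.Perm (Fin 3) => ρ (s, 1)) ∧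
    (∃ e : X ≃ X', ∀ (g : Equiv.Perm (Fin 3) × C) (x : X), e (ρ g x) = ρ' g (e x)) := by
  obtain ⟨e1, f, hC, hrel⟩ := one_action hX ρ hρ
  obtain ⟨e1', f', hC', hrel'⟩ := one_action hX' ρ' hρ'
  refine ⟨hC, psi_inj (ρ.comp (MonoidHom.inl _ _)) hρ, ?_⟩
  set e : X ≃ X' := (e1.trans (f' * f⁻¹ : Equiv.Perm (Fin 3))).trans e1'.symm with hedef
  have hex : ∀ z : X, e1' (e z) = f' (f⁻¹ (e1 z)) := by
    intro z
    simp [hedef, Equiv.Perm.mul_apply, Equiv.Perm.coe_mul]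
  refine ⟨e, fun g x => ?_⟩
  have hg1 : ρ g = ρ (g.1, 1) := by
    conv_lhs => rw [show g = (g.1, 1) * (1, g.2) by simp [Prod.ext_iff]]
    rw [map_mul, hC, mul_one]
  have hg1' : ρ' g = ρ' (g.1, 1) := by
    conv_lhs => rw [show g = (g.1, 1) * (1, g.2) by simp [Prod.ext_iff]]
    rw [map_mul, hC', mul_one]
  rw [hg1, hg1']
  refine e1'.injective ?_
  calc e1' (e (ρ (g.1, 1) x)) = f' (f⁻¹ (e1 (ρ (g.1, 1) x))) := hex _
    _ = f' (f⁻¹ (f (g.1 (f⁻¹ (e1 x))))) := by rw [hrel]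
    _ = f' (g.1 (f'⁻¹ (f' (f⁻¹ (e1 x))))) := by
        simp
    _ = f' (g.1 (f'⁻¹ (e1' (e x)))) := by rw [hex]
    _ = e1' (ρ' (g.1, 1) (e x)) := (hrel' _ _).symm
end

section
/- Let q ≥ 2 and a ≥ 2 be integers with (q, a) ≠ (2, 2). Then there exists a prime ℓ dividing q^{2a−1} + 1 such that ℓ does not divide q^f − 1 for any 1 ≤ f < 2(2a−1). -/
open Polynomial Finset ArithmeticFunction
open scoped ArithmeticFunction
open scoped ArithmeticFunction.Moebius

lemma zsig_two_pow_ge {n : ℕ} (h : 4 ≤ n) : 3 * (n+1) ≤ 2 ^ n := by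
  induction n, h using Nat.le_induction with
  | base => norm_num
  | succ k hk ih =>
    have : 2 ^ (k+1) = 2 * 2 ^ k := by ring
    omega

lemma zsig_prod_aux (q : ℚ) (hq : 2 ≤ q) (D : ℕ) :
    ∀ S : Finset ℕ, S ⊆ Finset.Icc 1 D → S.Nonempty →
      ∏ d ∈ S, (q ^ d + 1) ≤ (3 - 3 * q⁻¹ ^ D) * q ^ (∑ d ∈ S, d) := by
  have hq0 : 0 < q := by linarith
  have hx0 : 0 < q⁻¹ := by positivity
  have hx1 : q⁻¹ ≤ 1 := by rw [inv_le_one_iff₀]; right; linarith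
  induction D with
  | zero =>
    intro S hS hne
    obtain ⟨x, hx⟩ := hne
    have h1 := hS hx
    simp only [Finset.mem_Icc] at h1
    omega
  | succ D ih =>
    intro S hS hne
    have hqD : (2:ℚ) ≤ q ^ (D+1) := le_trans hq (le_self_pow₀ (by linarith) (by omega))
    have hxq : q⁻¹ ^ (D+1) * q ^ (D+1) = 1 := by
      rw [← mul_pow]; simp [inv_mul_cancel₀ (by linarith : q ≠ 0)]
    by_cases hmem : D + 1 ∈ S
    · set S' := S.erase (D+1) with hS'def
      have hS'sub : S' ⊆ Finset.Icc 1 D := by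
        intro x hxS
        have hx1' := hS (Finset.mem_of_mem_erase hxS)
        have hx2 := Finset.ne_of_mem_erase hxS
        simp only [Finset.mem_Icc] at hx1' ⊢
        omega
      have hprod : ∏ d ∈ S, (q ^ d + 1) = (q ^ (D+1) + 1) * ∏ d ∈ S', (q ^ d + 1) :=
        (Finset.mul_prod_erase S _ hmem).symm
      have hsum : ∑ d ∈ S, d = (D+1) + ∑ d ∈ S', d :=
        (Finset.add_sum_erase S _ hmem).symm
      rcases S'.eq_empty_or_nonempty with hS'e | hS'ne
      · rw [hprod, hsum, hS'e]
        simp only [Finset.prod_empty, Finset.sum_empty, mul_one, Nat.add_zero]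
        have : (3 - 3 * q⁻¹ ^ (D+1)) * q ^ (D+1) = 3 * q ^ (D+1) - 3 := by
          have : q⁻¹ ^ (D+1) * q ^ (D+1) = 1 := hxq
          nlinarith [this]
        rw [this]
        linarith
      · have hIH := ih S' hS'sub hS'ne
        rw [hprod, hsum]
        have hpos' : (0:ℚ) < q ^ (D+1) + 1 := by positivity
        calc (q ^ (D+1) + 1) * ∏ d ∈ S', (q ^ d + 1)
            ≤ (q ^ (D+1) + 1) * ((3 - 3 * q⁻¹ ^ D) * q ^ (∑ d ∈ S', d)) := by
              apply mul_le_mul_of_nonneg_left hIH hpos'.le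
          _ ≤ (3 - 3 * q⁻¹ ^ (D+1)) * q ^ ((D+1) + ∑ d ∈ S', d) := by
              rw [pow_add q (D+1)]
              have h1 : q ^ (D+1) + 1 = q ^ (D+1) * (1 + q⁻¹ ^ (D+1)) := by
                rw [mul_add, mul_one, mul_comm (q ^ (D+1)), hxq]
              rw [h1]
              have halg : (1 + q⁻¹ ^ (D+1)) * (3 - 3 * q⁻¹ ^ D) ≤ 3 - 3 * q⁻¹ ^ (D+1) := by
                have ht : 0 < q⁻¹ ^ (D+1) := by positivity
                have hyq : q⁻¹ ^ D = q * q⁻¹ ^ (D+1) := by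
                  rw [pow_succ, mul_comm (q⁻¹ ^ D), ← mul_assoc,
                    mul_inv_cancel₀ (by linarith : q ≠ 0), one_mul]
                rw [hyq]
                nlinarith [mul_nonneg (by linarith : (0:ℚ) ≤ q - 2) ht.le,
                  mul_pos (mul_pos hq0 ht) ht]
              calc q ^ (D+1) * (1 + q⁻¹ ^ (D+1)) * ((3 - 3 * q⁻¹ ^ D) * q ^ (∑ d ∈ S', d))
                  = ((1 + q⁻¹ ^ (D+1)) * (3 - 3 * q⁻¹ ^ D)) * (q ^ (D+1) * q ^ (∑ d ∈ S', d)) := by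
                    ring
                _ ≤ (3 - 3 * q⁻¹ ^ (D+1)) * (q ^ (D+1) * q ^ (∑ d ∈ S', d)) := by
                    apply mul_le_mul_of_nonneg_right halg
                    positivity
    · have hsub : S ⊆ Finset.Icc 1 D := by
        intro x hxS
        have h1 := hS hxS
        have h2 : x ≠ D + 1 := fun h => hmem (h ▸ hxS)
        simp only [Finset.mem_Icc] at h1 ⊢
        omega
      refine le_trans (ih S hsub hne) ?_
      apply mul_le_mul_of_nonneg_right _ (by positivity)
      have : q⁻¹ ^ (D+1) ≤ q⁻¹ ^ D := pow_le_pow_of_le_one hx0.le hx1 (by omega)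
      linarith

lemma zsig_prod_bound (q : ℚ) (hq : 2 ≤ q) (S : Finset ℕ) (hS : ∀ d ∈ S, 0 < d) :
    ∏ d ∈ S, (q ^ d + 1) < 3 * q ^ (∑ d ∈ S, d) := by
  have hq0 : 0 < q := by linarith
  rcases S.eq_empty_or_nonempty with rfl | hne
  · norm_num
  · have hmax := S.max'_mem hne
    set D := S.max' hne with hD
    have hsub : S ⊆ Finset.Icc 1 D := by
      intro x hx
      simp only [Finset.mem_Icc]
      exact ⟨hS x hx, S.le_max' x hx⟩
    refine lt_of_le_of_lt (zsig_prod_aux q hq D S hsub hne) ?_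
    have h1 : 0 < q⁻¹ ^ D := by positivity
    have h2 : (0:ℚ) < q ^ (∑ d ∈ S, d) := by positivity
    nlinarith

lemma zsig_divisors_two_mul {n : ℕ} (hn : Odd n) (h0 : 0 < n) :
    (2*n).divisors = n.divisors ∪ n.divisors.image (2 * ·) := by
  ext d
  simp only [Nat.mem_divisors, Finset.mem_union, Finset.mem_image]
  constructor
  · rintro ⟨hd, -⟩
    rcases Nat.even_or_odd d with he | ho
    · right
      obtain ⟨e, hde⟩ := he
      have hde' : d = 2 * e := by omega
      subst hde'
      have he' : e ∣ n := (mul_dvd_mul_iff_left (by norm_num : (2:ℕ) ≠ 0)).mp hd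
      exact ⟨e, ⟨he', by omega⟩, rfl⟩
    · left
      have hcop : d.Coprime 2 := Nat.coprime_two_right.mpr ho
      exact ⟨hcop.dvd_of_dvd_mul_left hd, by omega⟩
  · rintro (⟨hd, -⟩ | ⟨e, ⟨he, -⟩, rfl⟩)
    · exact ⟨hd.mul_left 2, by omega⟩
    · exact ⟨mul_dvd_mul_left 2 he, by omega⟩

lemma zsig_disj {n : ℕ} (hn : Odd n) :
    Disjoint n.divisors (n.divisors.image (2 * ·)) := by
  rw [Finset.disjoint_left]
  rintro d hd hd2
  obtain ⟨e, -, rfl⟩ := Finset.mem_image.mp hd2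
  have hdvd : (2:ℕ) ∣ n := dvd_trans ⟨e, rfl⟩ (Nat.dvd_of_mem_divisors hd)
  exact (Nat.not_even_iff_odd.mpr hn) (even_iff_two_dvd.mpr hdvd)

lemma zsig_prod_cyclo_eval (q : ℚ) (hq : 1 < q) {n : ℕ} (hn : Odd n) (h0 : 0 < n) :
    ∏ d ∈ n.divisors, (cyclotomic (2*d) ℚ).eval q = q^n + 1 := by
  have h2n : 0 < 2*n := by omega
  have hA := Polynomial.prod_cyclotomic_eq_X_pow_sub_one h2n ℚ
  have hB := Polynomial.prod_cyclotomic_eq_X_pow_sub_one h0 ℚ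
  have hevA : ∏ d ∈ (2*n).divisors, (cyclotomic d ℚ).eval q = q^(2*n) - 1 := by
    rw [← Polynomial.eval_prod, hA]; simp
  have hevB : ∏ d ∈ n.divisors, (cyclotomic d ℚ).eval q = q^n - 1 := by
    rw [← Polynomial.eval_prod, hB]; simp
  rw [zsig_divisors_two_mul hn h0, Finset.prod_union (zsig_disj hn)] at hevA
  rw [Finset.prod_image (fun a _ b _ hab => by omega)] at hevA
  have hne : q^n - 1 ≠ 0 := by
    have : (1:ℚ) < q^n := one_lt_pow₀ hq (by omega)
    linarith
  rw [hevB] at hevA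
  have hfact : q^(2*n) - 1 = (q^n - 1) * (q^n + 1) := by
    have h2 : q^(2*n) = q^n * q^n := by rw [two_mul, pow_add]
    rw [h2]; ring
  rw [hfact] at hevA
  exact mul_left_cancel₀ hne hevA

lemma zsig_odd_closed : ∀ a b : ℕ, a ∣ b → b ∈ {n : ℕ | Odd n} → a ∈ {n : ℕ | Odd n} := by
  intro a b hab hb
  simp only [Set.mem_setOf_eq, Nat.odd_iff] at *
  rcases Nat.even_or_odd a with he | ho
  · exfalso
    have : (2:ℕ) ∣ b := dvd_trans he.two_dvd hab
    omega
  · exact Nat.odd_iff.mp ho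

lemma zsig_cyclo_moebius (q : ℚ) (hq : 1 < q) {m : ℕ} (hm : Odd m) (h0 : 0 < m) :
    ∏ d ∈ m.divisors, ((q:ℚ)^d + 1) ^ (μ (m/d)) = (cyclotomic (2*m) ℚ).eval q := by
  have key := (ArithmeticFunction.prod_eq_iff_prod_pow_moebius_eq_on_of_nonzero
    {n : ℕ | Odd n} zsig_odd_closed
    (f := fun d => (cyclotomic (2*d) ℚ).eval q) (g := fun n => (q:ℚ)^n + 1)
    (fun n hn => (cyclotomic_pos' (2*n) hq).ne') (fun n hn => by positivity)).mp
  have h1 : ∀ n > 0, n ∈ {n : ℕ | Odd n} →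
      ∏ i ∈ n.divisors, (cyclotomic (2*i) ℚ).eval q = (q:ℚ)^n + 1 :=
    fun n hn hodd => zsig_prod_cyclo_eval q hq hodd hn
  have h2 := key h1 m h0 hm
  rw [← h2, ← Nat.prod_divisorsAntidiagonal' (fun x y => ((q:ℚ)^y + 1) ^ (μ x))]

lemma zsig_totient_moebius {m : ℕ} (h0 : 0 < m) :
    (m.totient : ℤ) = ∑ d ∈ m.divisors, (μ (m/d)) * (d : ℤ) := by
  have key := (ArithmeticFunction.sum_eq_iff_sum_mul_moebius_eq
    (R := ℤ) (f := fun d => ((d : ℕ).totient : ℤ)) (g := fun n => ((n : ℕ) : ℤ))).mp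
  have h1 : ∀ n : ℕ, n > 0 → ∑ i ∈ n.divisors, ((i : ℕ).totient : ℤ) = ((n : ℕ) : ℤ) := by
    intro n _
    exact_mod_cast congrArg (Nat.cast (R := ℤ)) (Nat.sum_totient n)
  have h2 := key h1 m h0
  rw [← Nat.sum_divisorsAntidiagonal' (fun x y => (μ x : ℤ) * (y : ℤ))]
  exact_mod_cast h2.symm

lemma zsig_cyclo_lower (q : ℚ) (hq : 2 ≤ q) {m : ℕ} (hm : Odd m) (h0 : 0 < m) :
    (q:ℚ) ^ m.totient < 3 * (cyclotomic (2*m) ℚ).eval q := by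
  have hq1 : (1:ℚ) < q := by linarith
  have hq0 : (0:ℚ) < q := by linarith
  set F : ℕ → ℚ := fun d => q^d + 1 with hF
  have hFpos : ∀ d, 0 < F d := fun d => by rw [hF]; positivity
  set Tp := m.divisors.filter (fun d => μ (m/d) = 1) with hTp
  set Tn := m.divisors.filter (fun d => μ (m/d) = -1) with hTn
  set G := (cyclotomic (2*m) ℚ).eval q with hG
  have hGpos : 0 < G := cyclotomic_pos' (2*m) hq1
  have hNpos : 0 < ∏ d ∈ Tn, F d := Finset.prod_pos (fun d _ => hFpos d)
  have e1 : ∏ d ∈ m.divisors, F d ^ (μ (m/d)) = (∏ d ∈ Tp, F d) * (∏ d ∈ Tn, F d)⁻¹ := by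
    rw [← Finset.prod_filter_mul_prod_filter_not m.divisors (fun d => μ (m/d) = 1)]
    congr 1
    · apply Finset.prod_congr rfl
      intro d hd
      rw [(Finset.mem_filter.mp hd).2, zpow_one]
    · rw [← Finset.prod_filter_mul_prod_filter_not
        (m.divisors.filter (fun d => ¬ μ (m/d) = 1)) (fun d => μ (m/d) = -1)]
      have hfe : (m.divisors.filter (fun d => ¬ μ (m/d) = 1)).filter (fun d => μ (m/d) = -1)
          = Tn := by
        rw [Finset.filter_filter, hTn]
        apply Finset.filter_congr
        intro d _
        constructor
        · rintro ⟨-, h⟩; exact h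
        · intro h; exact ⟨by rw [h]; decide, h⟩
      have hrest : ∏ d ∈ (m.divisors.filter (fun d => ¬ μ (m/d) = 1)).filter
          (fun d => ¬ μ (m/d) = -1), F d ^ (μ (m/d)) = 1 := by
        apply Finset.prod_eq_one
        intro d hd
        have h1 := (Finset.mem_filter.mp hd).2
        have h2 := (Finset.mem_filter.mp (Finset.mem_filter.mp hd).1).2
        rcases moebius_eq_or (m/d) with h | h | h
        · rw [h, zpow_zero]
        · exact absurd h h2
        · exact absurd h h1
      rw [hfe, hrest, mul_one]
      rw [← Finset.prod_inv_distrib]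
      apply Finset.prod_congr rfl
      intro d hd
      rw [(Finset.mem_filter.mp hd).2, zpow_neg, zpow_one]
  have M := zsig_cyclo_moebius q hq1 hm h0
  rw [e1] at M
  have hsplit : G * ∏ d ∈ Tn, F d = ∏ d ∈ Tp, F d := by
    rw [hG, ← M, mul_assoc, inv_mul_cancel₀ hNpos.ne', mul_one]
  have e2 : ∑ d ∈ m.divisors, (μ (m/d)) * (d:ℤ)
      = (∑ d ∈ Tp, (d:ℤ)) - ∑ d ∈ Tn, (d:ℤ) := by
    rw [← Finset.sum_filter_add_sum_filter_not m.divisors (fun d => μ (m/d) = 1)]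
    have ha : ∑ d ∈ Tp, (μ (m/d)) * (d:ℤ) = ∑ d ∈ Tp, (d:ℤ) := by
      apply Finset.sum_congr rfl
      intro d hd
      rw [(Finset.mem_filter.mp hd).2]
      push_cast; ring
    have hb : ∑ d ∈ m.divisors.filter (fun d => ¬ μ (m/d) = 1), (μ (m/d)) * (d:ℤ)
        = - ∑ d ∈ Tn, (d:ℤ) := by
      rw [← Finset.sum_filter_add_sum_filter_not
        (m.divisors.filter (fun d => ¬ μ (m/d) = 1)) (fun d => μ (m/d) = -1)]
      have hfe : (m.divisors.filter (fun d => ¬ μ (m/d) = 1)).filter (fun d => μ (m/d) = -1)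
          = Tn := by
        rw [Finset.filter_filter, hTn]
        apply Finset.filter_congr
        intro d _
        constructor
        · rintro ⟨-, h⟩; exact h
        · intro h; exact ⟨by rw [h]; decide, h⟩
      have hrest : ∑ d ∈ (m.divisors.filter (fun d => ¬ μ (m/d) = 1)).filter
          (fun d => ¬ μ (m/d) = -1), (μ (m/d)) * (d:ℤ) = 0 := by
        apply Finset.sum_eq_zero
        intro d hd
        have h1 := (Finset.mem_filter.mp hd).2
        have h2 := (Finset.mem_filter.mp (Finset.mem_filter.mp hd).1).2
        rcases moebius_eq_or (m/d) with h | h | h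
        · rw [h]; push_cast; ring
        · exact absurd h h2
        · exact absurd h h1
      rw [hfe, hrest, add_zero, ← Finset.sum_neg_distrib]
      apply Finset.sum_congr rfl
      intro d hd
      rw [(Finset.mem_filter.mp hd).2]
      push_cast; ring
    rw [ha, hb]; ring
  have hphisplit : (m.totient:ℤ) + ∑ d ∈ Tn, (d:ℤ) = ∑ d ∈ Tp, (d:ℤ) := by
    have := zsig_totient_moebius h0
    rw [e2] at this
    linarith
  have hsum : ∑ d ∈ Tp, d = m.totient + ∑ d ∈ Tn, d := by
    have h2 : ((∑ d ∈ Tp, d : ℕ) : ℤ) = ((m.totient + ∑ d ∈ Tn, d : ℕ) : ℤ) := by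
      push_cast
      exact hphisplit.symm
    exact_mod_cast h2
  have hTnpos : ∀ d ∈ Tn, 0 < d := fun d hd =>
    Nat.pos_of_mem_divisors (Finset.mem_of_mem_filter d hd)
  have hTnbound := zsig_prod_bound q hq Tn hTnpos
  have hTplow : (q:ℚ) ^ (∑ d ∈ Tp, d) ≤ ∏ d ∈ Tp, F d := by
    calc (q:ℚ) ^ (∑ d ∈ Tp, d) = ∏ d ∈ Tp, q^d := by
          rw [Finset.prod_pow_eq_pow_sum]
      _ ≤ ∏ d ∈ Tp, F d := by
          apply Finset.prod_le_prod (fun d _ => by positivity) (fun d _ => by simp only [hF]; linarith [pow_pos hq0 d])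
  have h1 : q ^ (∑ d ∈ Tp, d) < G * (3 * q ^ (∑ d ∈ Tn, d)) := by
    calc q ^ (∑ d ∈ Tp, d) ≤ ∏ d ∈ Tp, F d := hTplow
      _ = G * ∏ d ∈ Tn, F d := hsplit.symm
      _ < G * (3 * q ^ (∑ d ∈ Tn, d)) := by
          apply mul_lt_mul_of_pos_left hTnbound hGpos
  rw [hsum, pow_add] at h1
  have hpow : (0:ℚ) < q ^ (∑ d ∈ Tn, d) := by positivity
  refine (mul_lt_mul_iff_left₀ hpow).mp ?_
  calc q ^ m.totient * q ^ (∑ d ∈ Tn, d) < G * (3 * q ^ (∑ d ∈ Tn, d)) := h1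
    _ = 3 * G * q ^ (∑ d ∈ Tn, d) := by ring

lemma zsig_ord {q m ℓ : ℕ} (hl : ℓ.Prime)
    (hdvd : (ℓ:ℤ) ∣ Polynomial.eval (q:ℤ) (cyclotomic (2*m) ℤ)) (hm : 0 < m) :
    IsPrimitiveRoot (q : ZMod ℓ) ((2*m) / ℓ ^ ((2*m).factorization ℓ)) := by
  haveI : Fact ℓ.Prime := ⟨hl⟩
  set n := 2*m with hn
  have hn0 : n ≠ 0 := by omega
  set e := n.factorization ℓ with he
  set s := n / ℓ ^ e with hs
  have hns : ℓ ^ e * s = n := Nat.ordProj_mul_ordCompl_eq_self n ℓ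
  have hnds : ¬ ℓ ∣ s := Nat.not_dvd_ordCompl hl hn0
  haveI : NeZero (s : ZMod ℓ) := ⟨by
    intro h
    exact hnds ((ZMod.natCast_eq_zero_iff s ℓ).mp h)⟩
  have hroot : (cyclotomic n (ZMod ℓ)).IsRoot (q : ZMod ℓ) := by
    have h0 : ((Polynomial.eval (q:ℤ) (cyclotomic n ℤ) : ℤ) : ZMod ℓ) = 0 :=
      (ZMod.intCast_zmod_eq_zero_iff_dvd _ ℓ).mpr hdvd
    rw [IsRoot.def, ← map_cyclotomic_int n (ZMod ℓ)]
    have := Polynomial.eval_intCast_map (Int.castRingHom (ZMod ℓ)) (cyclotomic n ℤ) (q:ℤ)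
    simp only [Int.coe_castRingHom] at this
    rw [show ((q:ℕ) : ZMod ℓ) = (((q:ℕ) : ℤ) : ZMod ℓ) by push_cast; rfl, this]
    exact_mod_cast h0
  rw [← hns] at hroot
  exact (Polynomial.isRoot_cyclotomic_prime_pow_mul_iff_of_charP).mp hroot

/-- For `q ≥ 2`, `a ≥ 2` with `(q, a) ≠ (2, 2)` there is a prime `ℓ` dividing
`q^(2a-1) + 1` that divides no `q^f - 1` for `1 ≤ f < 2(2a-1)`. -/
theorem stmt_16 (q a : ℕ) (hq : 2 ≤ q) (ha : 2 ≤ a) (hexc : (q, a) ≠ (2, 2)) :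
    ∃ ℓ : ℕ, ℓ.Prime ∧ ℓ ∣ q ^ (2 * a - 1) + 1 ∧
      ∀ f : ℕ, 1 ≤ f → f < 2 * (2 * a - 1) → ¬ ℓ ∣ q ^ f - 1 := by
  set m := 2 * a - 1 with hmdef
  have hm3 : 3 ≤ m := by omega
  have hm0 : 0 < m := by omega
  have hmodd : Odd m := ⟨a - 1, by omega⟩
  have hq1 : 1 < q := by omega
  set C' : ℤ := Polynomial.eval (q:ℤ) (cyclotomic (2*m) ℤ) with hC'def
  have hC'pos : 0 < C' := by
    rw [hC'def]
    exact cyclotomic_pos' (2*m) (by exact_mod_cast hq1)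
  have hGC : (cyclotomic (2*m) ℚ).eval (q:ℚ) = (C' : ℚ) := by
    have h := Polynomial.eval_intCast_map (Int.castRingHom ℚ) (cyclotomic (2*m) ℤ) (q:ℤ)
    rw [map_cyclotomic_int] at h
    simp only [Int.coe_castRingHom] at h
    rw [hC'def]
    exact_mod_cast h
  have htot2 : 2 ≤ m.totient := by
    have he : Even m.totient := Nat.totient_even (by omega)
    have hp : 0 < m.totient := Nat.totient_pos.mpr hm0
    obtain ⟨t, ht⟩ := he
    omega
  have hKEY1 : (q:ℚ) ^ m.totient < 3 * (C' : ℚ) := by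
    have := zsig_cyclo_lower (q:ℚ) (by exact_mod_cast hq) hmodd hm0
    rwa [hGC] at this
  have hC2 : 2 ≤ C' := by
    have h4 : (4:ℚ) ≤ (q:ℚ) ^ m.totient := by
      calc (4:ℚ) = 2^2 := by norm_num
        _ ≤ (q:ℚ)^2 := by
            apply pow_le_pow_left₀ (by norm_num) (by exact_mod_cast hq)
        _ ≤ (q:ℚ)^m.totient := by
            apply pow_le_pow_right₀ (by exact_mod_cast hq1.le) htot2
    have h5 : (1:ℚ) < (C':ℚ) := by linarith
    have h6 : (1:ℤ) < C' := by exact_mod_cast h5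
    have h7 := Int.lt_iff_add_one_le.mp h6
    linarith
  set C : ℕ := C'.toNat with hCdef
  have hCC : (C : ℤ) = C' := Int.toNat_of_nonneg hC'pos.le
  have hC2n : 2 ≤ C := by
    have h := hC2
    rw [← hCC] at h
    exact_mod_cast h
  -- C' divides q^(2m) - 1
  have hCdvdA : C' ∣ (q:ℤ)^(2*m) - 1 := by
    have h := Polynomial.cyclotomic.dvd_X_pow_sub_one (2*m) ℤ
    have := Polynomial.eval_dvd (x := (q:ℤ)) h
    simpa using this
  by_cases hex : ∃ ℓ : ℕ, ℓ.Prime ∧ ℓ ∣ C ∧ ¬ ℓ ∣ 2*m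
  · obtain ⟨ℓ, hl, hlC, hlnm⟩ := hex
    haveI : Fact ℓ.Prime := ⟨hl⟩
    have hdvdz : (ℓ:ℤ) ∣ Polynomial.eval (q:ℤ) (cyclotomic (2*m) ℤ) := by
      rw [← hC'def, ← hCC]
      exact_mod_cast hlC
    have hfac0 : (2*m).factorization ℓ = 0 := Nat.factorization_eq_zero_of_not_dvd hlnm
    have hprim : IsPrimitiveRoot (q : ZMod ℓ) (2*m) := by
      have := zsig_ord hl hdvdz hm0
      rwa [hfac0, pow_zero, Nat.div_one] at this
    have hq2m : (q : ZMod ℓ)^(2*m) = 1 := hprim.pow_eq_one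
    have hmul : ((q : ZMod ℓ)^m) * ((q : ZMod ℓ)^m) = 1 := by
      rw [← pow_add, ← two_mul]; exact hq2m
    refine ⟨ℓ, hl, ?_, ?_⟩
    · rcases mul_self_eq_one_iff.mp hmul with h1 | h1
      · exfalso
        have := hprim.dvd_of_pow_eq_one m h1
        have := Nat.le_of_dvd hm0 this
        omega
      · have hz : ((q^m + 1 : ℕ) : ZMod ℓ) = 0 := by
          push_cast
          rw [h1]
          ring
        exact (ZMod.natCast_eq_zero_iff _ _).mp hz
    · intro f hf1 hf2 hdf
      have hqf : 1 ≤ q^f := Nat.one_le_pow _ _ (by omega)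
      have hz : ((q^f - 1 : ℕ) : ZMod ℓ) = 0 := (ZMod.natCast_eq_zero_iff _ _).mpr hdf
      rw [Nat.cast_sub hqf] at hz
      push_cast at hz
      have hqf1 : (q : ZMod ℓ)^f = 1 := by
        have : (q : ZMod ℓ)^f - 1 = 0 := hz
        linear_combination this
      have := hprim.dvd_of_pow_eq_one f hqf1
      have := Nat.le_of_dvd (by omega) this
      omega
  · exfalso
    push_neg at hex
    -- every prime divisor ℓ of C divides 2m; claim: ℓ odd and maximal
    have hclaim : ∀ ℓ : ℕ, ℓ.Prime → ℓ ∣ C →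
        ℓ ≠ 2 ∧ ∀ r : ℕ, r.Prime → r ∣ 2*m → r ≠ ℓ → r < ℓ := by
      intro ℓ hl hlC
      haveI : Fact ℓ.Prime := ⟨hl⟩
      have hl2m : ℓ ∣ 2*m := hex ℓ hl hlC
      have hdvdz : (ℓ:ℤ) ∣ Polynomial.eval (q:ℤ) (cyclotomic (2*m) ℤ) := by
        rw [← hC'def, ← hCC]
        exact_mod_cast hlC
      set e := (2*m).factorization ℓ with hedef
      set s := (2*m) / ℓ^e with hsdef
      have hprim := zsig_ord hl hdvdz hm0
      have hns : ℓ ^ e * s = 2*m := Nat.ordProj_mul_ordCompl_eq_self (2*m) ℓ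
      have hspos : 0 < s := Nat.ordCompl_pos ℓ (by omega)
      have hqne : (q : ZMod ℓ) ≠ 0 := by
        intro h0
        have := hprim.pow_eq_one
        rw [h0, zero_pow hspos.ne'] at this
        exact zero_ne_one this
      have hsdvd : s ∣ ℓ - 1 := by
        have h1 := hprim.eq_orderOf
        have h2 := ZMod.orderOf_dvd_card_sub_one hqne
        rwa [← h1] at h2
      constructor
      · rintro rfl
        -- s ∣ 1 so s = 1, then 2m = 2^e, m odd power of 2, m = 1 contra
        have hs1 : s = 1 := Nat.eq_one_of_dvd_one (by simpa using hsdvd)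
        rw [hs1, mul_one] at hns
        have hmd : m ∣ 2^e := by
          rw [hns]
          exact Dvd.intro_left 2 rfl
        have hcop : m.Coprime 2 := Nat.coprime_two_right.mpr hmodd
        have := Nat.Coprime.eq_one_of_dvd (hcop.pow_right e) hmd
        omega
      · intro r hr hr2m hrne
        have hrcop : r.Coprime (ℓ^e) :=
          Nat.Coprime.pow_right e ((Nat.coprime_primes hr hl).mpr hrne)
        have hrs : r ∣ s := hrcop.dvd_of_dvd_mul_left (by rwa [hns])
        have : r ∣ ℓ - 1 := hrs.trans hsdvd
        have hl2 : 2 ≤ ℓ := hl.two_le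
        have := Nat.le_of_dvd (by omega) this
        omega
    -- pick p = minFac C
    set p := C.minFac with hpdef
    have hp : p.Prime := Nat.minFac_prime (by omega)
    haveI : Fact p.Prime := ⟨hp⟩
    have hpC : p ∣ C := Nat.minFac_dvd C
    obtain ⟨hp2, hpmax⟩ := hclaim p hp hpC
    have hp2m : p ∣ 2*m := hex p hp hpC
    have hpodd : Odd p := hp.odd_of_ne_two hp2
    have hpm : p ∣ m := (Nat.coprime_two_right.mpr hpodd).dvd_of_dvd_mul_left hp2m
    have hp3 : 3 ≤ p := by
      have := hp.two_le
      rcases Nat.odd_iff.mp hpodd with h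
      omega
    -- all prime divisors of C equal p
    have hall : ∀ {r : ℕ}, r.Prime → r ∣ C → r = p := by
      intro r hr hrC
      by_contra hrne
      obtain ⟨hr2, hrmax⟩ := hclaim r hr hrC
      have h1 := hpmax r hr (hex r hr hrC) hrne
      have h2 := hrmax p hp hp2m (Ne.symm hrne)
      omega
    -- C is a power of p
    obtain hCpk := Nat.eq_prime_pow_of_unique_prime_dvd (by omega : C ≠ 0) hall
    set k := C.primeFactorsList.length with hkdef
    -- not p^2 ∣ C via LTE
    have hnotp2 : ¬ (p^2 ∣ C) := by
      intro hp2C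
      set e := (2*m).factorization p with hedef
      set s := (2*m) / p^e with hsdef
      have hns : p ^ e * s = 2*m := Nat.ordProj_mul_ordCompl_eq_self (2*m) p
      have hspos : 0 < s := Nat.ordCompl_pos p (by omega)
      have he1 : 1 ≤ e := hp.factorization_pos_of_dvd (by omega) hp2m
      have hprim := zsig_ord hp (show (p:ℤ) ∣ Polynomial.eval (q:ℤ) (cyclotomic (2*m) ℤ) by
        rw [← hC'def, ← hCC]; exact_mod_cast hpC) hm0
      have hprim' : IsPrimitiveRoot (q : ZMod p) s := hprim
      clear hprim
      clear_value e s
      have hBpos : 0 < p^(e-1)*s := Nat.mul_pos (pow_pos hp.pos _) hspos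
      -- p ∣ q^s - 1
      have hxy : (p:ℤ) ∣ (q:ℤ)^s - 1 := by
        have h1 : (q : ZMod p)^s = 1 := hprim'.pow_eq_one
        have : (((q:ℤ)^s - 1 : ℤ) : ZMod p) = 0 := by
          push_cast
          rw [h1]
          ring
        exact_mod_cast (ZMod.intCast_zmod_eq_zero_iff_dvd _ _).mp this
      have hx : ¬ (p:ℤ) ∣ (q:ℤ)^s := by
        intro h
        have h1 : (p:ℤ) ∣ 1 := by simpa using dvd_sub h hxy
        have h2 : (p:ℤ) = 1 := Int.eq_one_of_dvd_one (by positivity) h1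
        have : p = 1 := by exact_mod_cast h2
        have := hp.two_le
        omega
      have hpZ : Prime ((p:ℕ):ℤ) := Nat.prime_iff_prime_int.mp hp
      have hqs0 : (q:ℤ)^s - 1 ≠ 0 := by
        have : (1:ℤ) < (q:ℤ)^s := one_lt_pow₀ (by exact_mod_cast hq1) (by omega)
        omega
      have hfin : FiniteMultiplicity ((p:ℕ):ℤ) ((q:ℤ)^s - 1) :=
        Int.finiteMultiplicity_iff.mpr ⟨by simpa using hp.ne_one, hqs0⟩
      -- LTE at exponent e and e-1
      have hLTE : ∀ j : ℕ, emultiplicity ((p:ℕ):ℤ) ((q:ℤ)^(p^j * s) - 1)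
          = emultiplicity ((p:ℕ):ℤ) ((q:ℤ)^s - 1) + j := by
        intro j
        have := emultiplicity_pow_prime_pow_sub_pow_prime_pow (x := (q:ℤ)^s) (y := (1:ℤ))
          hpZ hpodd hxy hx j
        simpa [← pow_mul, mul_comm s (p^j)] using this
      have hA : emultiplicity ((p:ℕ):ℤ) ((q:ℤ)^(2*m) - 1)
          = emultiplicity ((p:ℕ):ℤ) ((q:ℤ)^s - 1) + e := by
        rw [← hLTE e, hns]
      have hB : emultiplicity ((p:ℕ):ℤ) ((q:ℤ)^(p^(e-1) * s) - 1)
          = emultiplicity ((p:ℕ):ℤ) ((q:ℤ)^s - 1) + (e-1) := hLTE (e-1)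
      -- divisibility: C' * (q^(p^(e-1) s) - 1) ∣ q^(2m) - 1
      have hBd : p^(e-1) * s ∣ 2*m := by
        rw [← hns]
        exact mul_dvd_mul_right (pow_dvd_pow p (by omega)) s
      have hBlt : p^(e-1) * s < 2*m := by
        rw [← hns]
        have h1 : p^(e-1) < p^e := Nat.pow_lt_pow_right (by omega) (by omega)
        exact Nat.mul_lt_mul_of_lt_of_le h1 (le_refl s) hspos
      have hdvd2 : C' * ((q:ℤ)^(p^(e-1) * s) - 1) ∣ (q:ℤ)^(2*m) - 1 := by
        have hpoly : cyclotomic (2*m) ℤ * (X^(p^(e-1)*s) - 1) ∣ (X^(2*m) - 1 : ℤ[X]) := by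
          rw [← Polynomial.prod_cyclotomic_eq_X_pow_sub_one hBpos ℤ,
            ← Polynomial.prod_cyclotomic_eq_X_pow_sub_one (by omega : 0 < 2*m) ℤ]
          have hnotmem : (2*m) ∉ (p^(e-1)*s).divisors := by
            intro hmem
            have := Nat.le_of_dvd hBpos (Nat.dvd_of_mem_divisors hmem)
            omega
          have hsub : insert (2*m) ((p^(e-1)*s).divisors) ⊆ (2*m).divisors := by
            intro x hx
            rcases Finset.mem_insert.mp hx with rfl | hx'
            · exact Nat.mem_divisors.mpr ⟨dvd_rfl, by omega⟩
            · exact Nat.divisors_subset_of_dvd (by omega) hBd hx'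
          have hdd := Finset.prod_dvd_prod_of_subset _ _ (fun i => cyclotomic i ℤ) hsub
          rw [Finset.prod_insert hnotmem] at hdd
          exact hdd
        have := Polynomial.eval_dvd (x := (q:ℤ)) hpoly
        simpa using this
      -- p^2 ∣ C'
      have hp2C' : ((p:ℤ))^2 ∣ C' := by
        rw [← hCC]
        exact_mod_cast (Int.natCast_dvd_natCast.mpr hp2C)
      -- combine emultiplicities
      obtain ⟨t, ht⟩ := hdvd2
      obtain ⟨w, hw⟩ := hp2C'
      have hAne : ((q:ℤ)^(2*m) - 1) ≠ 0 := by
        have : (1:ℤ) < (q:ℤ)^(2*m) := one_lt_pow₀ (by exact_mod_cast hq1) (by omega)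
        omega
      have hBne : ((q:ℤ)^(p^(e-1)*s) - 1) ≠ 0 := by
        have : (1:ℤ) < (q:ℤ)^(p^(e-1)*s) := one_lt_pow₀ (by exact_mod_cast hq1)
          (by positivity)
        omega
      have hvA : 2 + emultiplicity ((p:ℕ):ℤ) ((q:ℤ)^(p^(e-1)*s) - 1)
          ≤ emultiplicity ((p:ℕ):ℤ) ((q:ℤ)^(2*m) - 1) := by
        calc 2 + emultiplicity ((p:ℕ):ℤ) ((q:ℤ)^(p^(e-1)*s) - 1)
            ≤ (2 + emultiplicity ((p:ℕ):ℤ) w + emultiplicity ((p:ℕ):ℤ) ((q:ℤ)^(p^(e-1)*s) - 1))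
              + emultiplicity ((p:ℕ):ℤ) t := by
              refine le_add_right (add_le_add_left le_self_add _)
          _ = emultiplicity ((p:ℕ):ℤ) ((q:ℤ)^(2*m) - 1) := by
              rw [ht, hw, emultiplicity_mul hpZ, emultiplicity_mul hpZ, emultiplicity_mul hpZ,
                emultiplicity_pow_self (by exact_mod_cast hp.pos.ne' : ((p:ℕ):ℤ) ≠ 0)
                  hpZ.not_unit 2]
              push_cast
              ring
      rw [hA, hB] at hvA
      have hXne := finiteMultiplicity_iff_emultiplicity_ne_top.mp hfin
      set X := emultiplicity ((p:ℕ):ℤ) ((q:ℤ)^s - 1) with hXdef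
      lift X to ℕ using hXne with x0
      have hfin2 : 2 + (x0 + ((e-1:ℕ):ℕ∞)) ≤ (x0:ℕ∞) + (e:ℕ∞) := hvA
      have : 2 + (x0 + (e-1)) ≤ x0 + e := by exact_mod_cast hfin2
      omega
    -- then C ≤ p, i.e. k ≤ 1
    have hCle : C ≤ p := by
      rcases Nat.lt_or_ge k 2 with hk | hk
      · calc C = p^k := hCpk
          _ ≤ p^1 := Nat.pow_le_pow_right hp.pos (by omega)
          _ = p := pow_one p
      · exfalso
        apply hnotp2
        rw [hCpk]
        exact pow_dvd_pow p hk
    -- KEY2 : 3*p ≤ q^totient m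
    have hKEY2 : 3 * p ≤ q ^ m.totient := by
      have hφp : p - 1 ≤ m.totient := by
        have h1 : (p.totient) ∣ m.totient := Nat.totient_dvd_of_dvd hpm
        have := Nat.le_of_dvd (Nat.totient_pos.mpr hm0) h1
        rwa [Nat.totient_prime hp] at this
      rcases Nat.lt_or_ge p 5 with hp5 | hp5
      · -- p = 3
        have hp3' : p = 3 := by
          have hpar : p % 2 = 1 := Nat.odd_iff.mp hpodd
          omega
        -- all prime factors of m are 3
        have h3 : ∀ {r : ℕ}, r.Prime → r ∣ m → r = 3 := by
          intro r hr hrm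
          by_contra hrne
          have h1 := hpmax r hr (hrm.mul_left 2) (by omega)
          have hrodd : Odd r := by
            rcases hr.eq_two_or_odd' with rfl | h
            · exfalso
              exact Nat.not_even_iff_odd.mpr hmodd (even_iff_two_dvd.mpr hrm)
            · exact h
          have := hr.two_le
          rcases Nat.odd_iff.mp hrodd with h
          omega
        by_cases hm3' : m = 3
        · -- q ≥ 3
          have hq3 : 3 ≤ q := by
            rcases Nat.lt_or_ge q 3 with h | h
            · exfalso
              apply hexc
              have : q = 2 := by omega
              have : a = 2 := by omega
              simp_all
            · exact h
          have hφ : m.totient = 2 := by rw [hm3']; decide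
          rw [hφ, hp3']
          nlinarith
        · -- 9 ∣ m
          have hm9 : 9 ∣ m := by
            obtain h := Nat.eq_prime_pow_of_unique_prime_dvd (by omega : m ≠ 0) h3
            set j := m.primeFactorsList.length with hj
            have hj2 : 2 ≤ j := by
              by_contra hjlt
              push_neg at hjlt
              interval_cases j
              · rw [pow_zero] at h; omega
              · rw [pow_one] at h; omega
            rw [h]
            have : (9:ℕ) = 3^2 := by norm_num
            rw [this]
            exact pow_dvd_pow 3 hj2
          have h9 : 6 ≤ m.totient := by
            have h1 : (9:ℕ).totient ∣ m.totient := Nat.totient_dvd_of_dvd hm9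
            have h2 : (9:ℕ).totient = 6 := by decide
            have := Nat.le_of_dvd (Nat.totient_pos.mpr hm0) h1
            omega
          calc 3 * p = 9 := by omega
            _ ≤ 2^6 := by norm_num
            _ ≤ q^6 := Nat.pow_le_pow_left hq 6
            _ ≤ q^m.totient := Nat.pow_le_pow_right (by omega) h9
      · -- p ≥ 5
        calc 3 * p = 3 * ((p-1)+1) := by omega
          _ ≤ 2^(p-1) := zsig_two_pow_ge (by omega)
          _ ≤ q^(p-1) := Nat.pow_le_pow_left hq _
          _ ≤ q^m.totient := Nat.pow_le_pow_right (by omega) hφp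
    -- contradiction
    have : (3:ℚ) * p ≤ (q:ℚ)^m.totient := by exact_mod_cast hKEY2
    have hCp : (C':ℚ) > p := by linarith
    have : (p:ℚ) < C := by rwa [show ((C:ℚ)) = (C':ℚ) by exact_mod_cast hCC]
    have : p < C := by exact_mod_cast this
    omega
end
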